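/- In the τ-blow-up of the cycle C_σ, for every nonempty proper subset S of the vertex set, the number of edges with exactly one endpoint in S is at least 2τ. -/

import Mathlib

/-- The τ-blow-up of the cycle `C_σ`. -/
def cycleBlowup (σ τ : ℕ) [NeZero σ] : SimpleGraph (ZMod σ × Fin τ) :=
  SimpleGraph.fromRel (fun v w => w.1 = v.1 + 1)

instance (σ τ : ℕ) [NeZero σ] : DecidableRel (cycleBlowup σ τ).Adj := fun v w =>
  decidable_of_iff (v ≠ w ∧ (w.1 = v.1 + 1 ∨ v.1 = w.1 + 1)) Iff.rfl

private lemma exists_flip {σ : ℕ} [NeZero σ] (P : ZMod σ → Prop) {ωa ωb : ZMod σ}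
    (ha : P ωa) (hb : ¬ P ωb) : ∃ ω, P ω ∧ ¬ P (ω + 1) := by
  by_contra hcon
  push_neg at hcon
  have key : ∀ k : ℕ, P (ωa + k) := by
    intro k
    induction k with
    | zero => simpa using ha
    | succ n ih =>
      have h := hcon _ ih
      have hc : ((n + 1 : ℕ) : ZMod σ) = (n : ZMod σ) + 1 := by push_cast; ring
      rw [hc, ← add_assoc]
      exact h
  apply hb
  have hrep : ωb = ωa + ((ωb - ωa).val : ℕ) := by
    rw [ZMod.natCast_val, ZMod.cast_id]; ring
  rw [hrep]
  exact key _

/-- For every nonempty proper subset `S` of the vertices of the τ-blow-up of `C_σ`,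
the edge boundary of `S` (edges with exactly one endpoint in `S`, here counted as
ordered pairs `(p₁, p₂)` with `p₁ ∈ S` and `p₂ ∉ S`, which counts each boundary
edge exactly once) has size at least `2τ`. -/
theorem stmt_3 (σ τ : ℕ) [NeZero σ] (hσ : 3 ≤ σ) (hτ : 1 ≤ τ)
    (S : Finset (ZMod σ × Fin τ)) (hne : S.Nonempty) (hproper : S ≠ Finset.univ) :
    2 * τ ≤ (Finset.univ.filter (fun p : (ZMod σ × Fin τ) × (ZMod σ × Fin τ) =>
      (cycleBlowup σ τ).Adj p.1 p.2 ∧ p.1 ∈ S ∧ p.2 ∉ S)).card := by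
  classical
  have h1 : (1 : ZMod σ) ≠ 0 := by
    intro h
    have h' : ((1 : ℕ) : ZMod σ) = 0 := by exact_mod_cast h
    have hd := (CharP.cast_eq_zero_iff (ZMod σ) σ 1).mp h'
    have := Nat.le_of_dvd one_pos hd
    omega
  have h2 : (2 : ZMod σ) ≠ 0 := by
    intro h
    have h' : ((2 : ℕ) : ZMod σ) = 0 := by exact_mod_cast h
    have hd := (CharP.cast_eq_zero_iff (ZMod σ) σ 2).mp h'
    have := Nat.le_of_dvd two_pos hd
    omega
  set Bd := (Finset.univ.filter (fun p : (ZMod σ × Fin τ) × (ZMod σ × Fin τ) =>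
      (cycleBlowup σ τ).Adj p.1 p.2 ∧ p.1 ∈ S ∧ p.2 ∉ S)) with hBd
  set L : ZMod σ → Finset (ZMod σ × Fin τ) :=
    fun ω => Finset.univ.filter (fun p => p.1 = ω) with hLdef
  set A : ZMod σ → Finset (ZMod σ × Fin τ) :=
    fun ω => (L ω).filter (fun p => p ∈ S) with hAdef
  set C : ZMod σ → Finset (ZMod σ × Fin τ) :=
    fun ω => (L ω).filter (fun p => p ∉ S) with hCdef
  have hmemA : ∀ (ω : ZMod σ) (p : ZMod σ × Fin τ), p ∈ A ω ↔ p.1 = ω ∧ p ∈ S := by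
    intro ω p; simp [hAdef, hLdef, and_comm]
  have hmemC : ∀ (ω : ZMod σ) (p : ZMod σ × Fin τ), p ∈ C ω ↔ p.1 = ω ∧ p ∉ S := by
    intro ω p; simp [hCdef, hLdef, and_comm]
  have hLcard : ∀ ω, (L ω).card = τ := by
    intro ω
    have hLeq : L ω = ({ω} : Finset (ZMod σ)) ×ˢ (Finset.univ : Finset (Fin τ)) := by
      ext ⟨x, t⟩
      simp [hLdef, Finset.mem_product, Prod.ext_iff, eq_comm]
    rw [hLeq, Finset.card_product]
    simp
  have hsplit : ∀ ω, (A ω).card + (C ω).card = τ := by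
    intro ω
    have h := Finset.card_filter_add_card_filter_not
      (s := L ω) (p := fun p => p ∈ S)
    rw [hLcard ω] at h
    exact h
  have hsub1 : ∀ ω, A ω ×ˢ C (ω + 1) ⊆ Bd := by
    rintro ω ⟨u, v⟩ hp
    rw [Finset.mem_product] at hp
    obtain ⟨hu, hv⟩ := hp
    rw [hmemA] at hu
    rw [hmemC] at hv
    rw [hBd, Finset.mem_filter]
    refine ⟨Finset.mem_univ _, ?_, hu.2, hv.2⟩
    simp only [cycleBlowup, SimpleGraph.fromRel_adj]
    refine ⟨?_, Or.inl (by rw [hv.1, hu.1])⟩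
    intro h
    apply h1
    have hx : u.1 = v.1 := by rw [h]
    rw [hu.1, hv.1] at hx
    linear_combination -hx
  have hsub2 : ∀ ω, A (ω + 1) ×ˢ C ω ⊆ Bd := by
    rintro ω ⟨u, v⟩ hp
    rw [Finset.mem_product] at hp
    obtain ⟨hu, hv⟩ := hp
    rw [hmemA] at hu
    rw [hmemC] at hv
    rw [hBd, Finset.mem_filter]
    refine ⟨Finset.mem_univ _, ?_, hu.2, hv.2⟩
    simp only [cycleBlowup, SimpleGraph.fromRel_adj]
    refine ⟨?_, Or.inr (by rw [hu.1, hv.1])⟩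
    intro h
    apply h1
    have hx : u.1 = v.1 := by rw [h]
    rw [hu.1, hv.1] at hx
    linear_combination hx
  have hdisj : ∀ w x y z : ZMod σ, (w ≠ y ∨ x ≠ z) →
      Disjoint (A w ×ˢ C x) (A y ×ˢ C z) := by
    intro w x y z hne'
    rw [Finset.disjoint_left]
    rintro ⟨u, v⟩ hp hq
    rw [Finset.mem_product] at hp hq
    obtain ⟨hu1, hv1⟩ := hp
    obtain ⟨hu2, hv2⟩ := hq
    rw [hmemA] at hu1 hu2
    rw [hmemC] at hv1 hv2
    rcases hne' with h | h
    · exact h (by rw [← hu1.1, hu2.1])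
    · exact h (by rw [← hv1.1, hv2.1])
  by_cases hmix : ∃ ω, (A ω).Nonempty ∧ (C ω).Nonempty
  · obtain ⟨ω0, hA0, hC0⟩ := hmix
    have ha0 : 1 ≤ (A ω0).card := Finset.card_pos.mpr hA0
    have hc0 : 1 ≤ (C ω0).card := Finset.card_pos.mpr hC0
    have e1 : ω0 - 1 + 1 = ω0 := by ring
    have P1 := hsub1 ω0
    have P2 := hsub2 ω0
    have P3 : A ω0 ×ˢ C (ω0 - 1) ⊆ Bd := by
      have h := hsub2 (ω0 - 1); rwa [e1] at h
    have P4 : A (ω0 - 1) ×ˢ C ω0 ⊆ Bd := by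
      have h := hsub1 (ω0 - 1); rwa [e1] at h
    have d1 : ω0 ≠ ω0 + 1 := by
      intro h; apply h1; linear_combination -h
    have d2 : ω0 + 1 ≠ ω0 - 1 := by
      intro h; apply h2; linear_combination h
    have d3 : ω0 ≠ ω0 - 1 := by
      intro h; apply h1; linear_combination h
    have D12 := hdisj ω0 (ω0 + 1) (ω0 + 1) ω0 (Or.inl d1)
    have D13 := hdisj ω0 (ω0 + 1) ω0 (ω0 - 1) (Or.inr d2)
    have D14 := hdisj ω0 (ω0 + 1) (ω0 - 1) ω0 (Or.inl d3)
    have D23 := hdisj (ω0 + 1) ω0 ω0 (ω0 - 1) (Or.inl (Ne.symm d1))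
    have D24 := hdisj (ω0 + 1) ω0 (ω0 - 1) ω0 (Or.inl d2)
    have D34 := hdisj ω0 (ω0 - 1) (ω0 - 1) ω0 (Or.inl d3)
    have Dbig : Disjoint ((A ω0 ×ˢ C (ω0 + 1)) ∪ (A (ω0 + 1) ×ˢ C ω0))
        ((A ω0 ×ˢ C (ω0 - 1)) ∪ (A (ω0 - 1) ×ˢ C ω0)) := by
      rw [Finset.disjoint_union_left, Finset.disjoint_union_right,
        Finset.disjoint_union_right]
      exact ⟨⟨D13, D14⟩, ⟨D23, D24⟩⟩
    have c12 : ((A ω0 ×ˢ C (ω0 + 1)) ∪ (A (ω0 + 1) ×ˢ C ω0)).card =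
        (A ω0).card * (C (ω0 + 1)).card + (A (ω0 + 1)).card * (C ω0).card := by
      rw [Finset.card_union_of_disjoint D12, Finset.card_product, Finset.card_product]
    have c34 : ((A ω0 ×ˢ C (ω0 - 1)) ∪ (A (ω0 - 1) ×ˢ C ω0)).card =
        (A ω0).card * (C (ω0 - 1)).card + (A (ω0 - 1)).card * (C ω0).card := by
      rw [Finset.card_union_of_disjoint D34, Finset.card_product, Finset.card_product]
    have hx1 : (C (ω0 + 1)).card ≤ (A ω0).card * (C (ω0 + 1)).card :=
      Nat.le_mul_of_pos_left _ (by omega)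
    have hy1 : (A (ω0 + 1)).card ≤ (A (ω0 + 1)).card * (C ω0).card :=
      Nat.le_mul_of_pos_right _ (by omega)
    have hx2 : (C (ω0 - 1)).card ≤ (A ω0).card * (C (ω0 - 1)).card :=
      Nat.le_mul_of_pos_left _ (by omega)
    have hy2 : (A (ω0 - 1)).card ≤ (A (ω0 - 1)).card * (C ω0).card :=
      Nat.le_mul_of_pos_right _ (by omega)
    have hs1 := hsplit (ω0 + 1)
    have hs2 := hsplit (ω0 - 1)
    calc 2 * τ ≤ ((A ω0).card * (C (ω0 + 1)).card + (A (ω0 + 1)).card * (C ω0).card)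
        + ((A ω0).card * (C (ω0 - 1)).card + (A (ω0 - 1)).card * (C ω0).card) := by
          linarith
      _ = (((A ω0 ×ˢ C (ω0 + 1)) ∪ (A (ω0 + 1) ×ˢ C ω0)) ∪
          ((A ω0 ×ˢ C (ω0 - 1)) ∪ (A (ω0 - 1) ×ˢ C ω0))).card := by
          rw [Finset.card_union_of_disjoint Dbig, c12, c34]
      _ ≤ Bd.card := Finset.card_le_card (Finset.union_subset
          (Finset.union_subset P1 P2) (Finset.union_subset P3 P4))
  · push_neg at hmix
    obtain ⟨v, hv⟩ := hne
    obtain ⟨w, hw⟩ : ∃ w, w ∉ S := by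
      by_contra h
      push_neg at h
      exact hproper (Finset.eq_univ_iff_forall.mpr h)
    have hPa : (A v.1).Nonempty := ⟨v, (hmemA _ _).mpr ⟨rfl, hv⟩⟩
    have hPb : ¬ (A w.1).Nonempty := fun h =>
      Finset.Nonempty.ne_empty ⟨w, (hmemC _ _).mpr ⟨rfl, hw⟩⟩ (hmix _ h)
    obtain ⟨ω1, hω1, hω1'⟩ := exists_flip (fun ω => (A ω).Nonempty) hPa hPb
    obtain ⟨ω2, hω2, hω2'⟩ := exists_flip (fun ω => ¬ (A ω).Nonempty) hPb
      (not_not_intro hPa)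
    have hω2'' : (A (ω2 + 1)).Nonempty := not_not.mp hω2'
    have cA1 : (A ω1).card = τ := by
      have hC : (C ω1).card = 0 := by
        by_contra h
        exact (Finset.card_pos.mp (Nat.pos_of_ne_zero h)).ne_empty (hmix ω1 hω1)
      have := hsplit ω1; omega
    have cC1 : (C (ω1 + 1)).card = τ := by
      have hA : (A (ω1 + 1)).card = 0 := by
        by_contra h
        exact hω1' (Finset.card_pos.mp (Nat.pos_of_ne_zero h))
      have := hsplit (ω1 + 1); omega
    have cA2 : (A (ω2 + 1)).card = τ := by
      have hC : (C (ω2 + 1)).card = 0 := by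
        by_contra h
        exact (Finset.card_pos.mp (Nat.pos_of_ne_zero h)).ne_empty (hmix (ω2 + 1) hω2'')
      have := hsplit (ω2 + 1); omega
    have cC2 : (C ω2).card = τ := by
      have hA : (A ω2).card = 0 := by
        by_contra h
        exact hω2 (Finset.card_pos.mp (Nat.pos_of_ne_zero h))
      have := hsplit ω2; omega
    have hd : Disjoint (A ω1 ×ˢ C (ω1 + 1)) (A (ω2 + 1) ×ˢ C ω2) := by
      apply hdisj
      by_cases he : ω1 = ω2 + 1
      · right
        intro h
        apply h2
        linear_combination h - he
      · left; exact he
    have hmul : τ ≤ τ * τ := Nat.le_mul_of_pos_right _ (by omega)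
    calc 2 * τ ≤ τ * τ + τ * τ := by linarith
      _ = ((A ω1 ×ˢ C (ω1 + 1)) ∪ (A (ω2 + 1) ×ˢ C ω2)).card := by
          rw [Finset.card_union_of_disjoint hd, Finset.card_product,
            Finset.card_product, cA1, cC1, cA2, cC2]
      _ ≤ Bd.card := Finset.card_le_card (Finset.union_subset (hsub1 ω1) (hsub2 ω2))
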